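/- Let I be a finite interval Markov chain, α a state label, ~ ∈ {≤, <, >, ≥}, and 0 < q < 1. Then there exists a Markov chain M with M ⊨ᵒ I (once-and-for-all semantics) and P^M(◊α) ~ q if and only if there exists a Markov chain M' with M' ⊨ᵃ I (at-every-step semantics) and P^{M'}(◊α) ~ q. -/

import Mathlib

open Classical

structure MC (S : Type) (A : Type) where
  s0 : S
  p : S → S → ℝ
  nonneg : ∀ s s', 0 ≤ p s s'
  sum_one : ∀ s, ∑ᶠ s', p s s' = 1
  V : S → Set A

namespace MC

variable {S A : Type}

/-- Probability of a finite path (product of transition probabilities). -/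
def pathProb (p : S → S → ℝ) : S → List S → ℝ
  | _, [] => 1
  | s, s' :: l => p s s' * pathProb p s' l

/-- `UntilPath φ ψ s l` : starting from `s`, the (nonempty) suffix `l` first reaches a
`ψ`-state at its last position, with `φ` holding at all strictly earlier positions after
the start. -/
inductive UntilPath (φ ψ : S → Prop) : S → List S → Prop
  | single {s s' : S} (h : ψ s') : UntilPath φ ψ s [s']
  | cons {s s' : S} {l : List S} (hψ : ¬ ψ s') (hφ : φ s') (h : UntilPath φ ψ s' l) :
      UntilPath φ ψ s (s' :: l)

/-- `P_s(φ U ψ)` : first-passage sum over until-paths. -/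
noncomputable def untilProb (p : S → S → ℝ) (φ ψ : S → Prop) (s : S) : ℝ :=
  ∑' l : {l : List S // UntilPath φ ψ s l}, pathProb p s l.1

/-- `P_s(◊ψ)` : probability of eventually reaching a `ψ`-state from `s`. -/
noncomputable def reachProb (p : S → S → ℝ) (ψ : S → Prop) (s : S) : ℝ :=
  if ψ s then 1 else untilProb p (fun _ => True) ψ s

/-- `P^M(◊α)` : probability of eventually reaching a state labeled `α` from the initial
state of `M`. -/
noncomputable def Preach (M : MC S A) (α : Set A) : ℝ :=
  reachProb M.p (fun s => M.V s = α) M.s0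

/-- Reachability via positive-probability transitions. -/
def Reaches (p : S → S → ℝ) : S → S → Prop :=
  Relation.ReflTransGen fun a b => 0 < p a b

end MC

/-- Interval Markov chain: each transition carries an interval `[Plo, Phi] ⊆ [0,1]`. -/
structure IMC (S : Type) (A : Type) where
  s0 : S
  Plo : S → S → ℝ
  Phi : S → S → ℝ
  V : S → Set A

/-- Once-and-for-all satisfaction `M ⊨ᵒ I`. -/
def SatO {S A : Type} (M : MC S A) (I : IMC S A) : Prop :=
  M.s0 = I.s0 ∧ M.V = I.V ∧
    ∀ s, MC.Reaches M.p M.s0 s → ∀ s', M.p s s' ∈ Set.Icc (I.Plo s s') (I.Phi s s')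

/-- `R` is an at-every-step satisfaction relation between `M` and `I`. -/
def IsSatRel {T S A : Type} (M : MC T A) (I : IMC S A) (R : T → S → Prop) : Prop :=
  R M.s0 I.s0 ∧
    ∀ t s, R t s → M.V t = I.V s ∧
      ∃ δ : T → S → ℝ,
        (∀ t' s', 0 ≤ δ t' s') ∧
        (∀ t', 0 < M.p t t' → ∑ᶠ s', δ t' s' = 1) ∧
        (∀ s', (∑ᶠ t', M.p t t' * δ t' s') ∈ Set.Icc (I.Plo s s') (I.Phi s s')) ∧
        (∀ t' s', 0 < δ t' s' → R t' s')

/-- At-every-step satisfaction `M ⊨ᵃ I`. -/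
def SatA {T S A : Type} (M : MC T A) (I : IMC S A) : Prop :=
  ∃ R, IsSatRel M I R

/-- `M` satisfies `I` with degree `n`. -/
def SatADeg {T S A : Type} (n : ℕ) (M : MC T A) (I : IMC S A) : Prop :=
  ∃ R, IsSatRel M I R ∧ ∀ t, {s | R t s}.ncard ≤ n

/-- Combined transition function on the disjoint union of two Markov chains. -/
def sumP {S T A : Type} (M : MC S A) (N : MC T A) : S ⊕ T → S ⊕ T → ℝ
  | .inl a, .inl b => M.p a b
  | .inr a, .inr b => N.p a b
  | _, _ => 0

/-- Combined labelling on the disjoint union. -/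
def sumV {S T A : Type} (M : MC S A) (N : MC T A) : S ⊕ T → Set A :=
  Sum.elim M.V N.V

/-- Probabilistic bisimilarity of two Markov chains. -/
def Bisimilar {S T A : Type} (M : MC S A) (N : MC T A) : Prop :=
  ∃ B : (S ⊕ T) → (S ⊕ T) → Prop,
    Equivalence B ∧ B (Sum.inl M.s0) (Sum.inr N.s0) ∧
    ∀ a b, B a b → sumV M N a = sumV M N b ∧
      ∀ C : Set (S ⊕ T), (∀ x y, B x y → (x ∈ C ↔ y ∈ C)) →
        (∑ᶠ c ∈ C, sumP M N a c) = ∑ᶠ c ∈ C, sumP M N b c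

namespace MCcore

variable {S : Type} [Fintype S]

/-- n-step until-value iteration. -/
noncomputable def iterU (p : S → S → ℝ) (ψ : S → Prop) : ℕ → S → ℝ
  | 0 => fun _ => 0
  | n+1 => fun s => ∑ s', p s s' * (if ψ s' then 1 else iterU p ψ n s')

variable {p : S → S → ℝ} {ψ : S → Prop}

lemma iterU_nonneg (hp0 : ∀ s s', 0 ≤ p s s') : ∀ n s, 0 ≤ iterU p ψ n s := by
  intro n
  induction n with
  | zero => intro s; simp [iterU]
  | succ n ih =>
    intro s
    apply Finset.sum_nonneg
    intro s' _
    have : (0:ℝ) ≤ (if ψ s' then 1 else iterU p ψ n s') := by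
      split <;> [norm_num; exact ih s']
    exact mul_nonneg (hp0 s s') this

lemma iterU_le_one (hp0 : ∀ s s', 0 ≤ p s s') (hp1 : ∀ s, ∑ s', p s s' = 1) :
    ∀ n s, iterU p ψ n s ≤ 1 := by
  intro n
  induction n with
  | zero => intro s; simp [iterU]
  | succ n ih =>
    intro s
    calc ∑ s', p s s' * (if ψ s' then 1 else iterU p ψ n s') ≤ ∑ s', p s s' := by
          apply Finset.sum_le_sum
          intro s' _
          have h1 : (if ψ s' then (1:ℝ) else iterU p ψ n s') ≤ 1 := by
            split <;> [exact le_rfl; exact ih s']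
          calc p s s' * (if ψ s' then 1 else iterU p ψ n s') ≤ p s s' * 1 :=
                mul_le_mul_of_nonneg_left h1 (hp0 s s')
            _ = p s s' := mul_one _
      _ = 1 := hp1 s

lemma iterU_mono (hp0 : ∀ s s', 0 ≤ p s s') : ∀ n s, iterU p ψ n s ≤ iterU p ψ (n+1) s := by
  intro n
  induction n with
  | zero => intro s; simpa [iterU] using iterU_nonneg (ψ := ψ) hp0 1 s
  | succ n ih =>
    intro s
    apply Finset.sum_le_sum
    intro s' _
    apply mul_le_mul_of_nonneg_left _ (hp0 s s')
    split
    · exact le_rfl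
    · exact ih s'

end MCcore
section part2
open Filter Topology
namespace MCcore

variable {S : Type} [Fintype S]
variable {p : S → S → ℝ} {ψ : S → Prop}

lemma untilPath_ne_nil {φ : S → Prop} {s : S} {l : List S}
    (h : MC.UntilPath φ ψ s l) : l ≠ [] := by
  cases h <;> simp

lemma untilPath_cons_elim {φ : S → Prop} {s a : S} {l : List S}
    (h : MC.UntilPath φ ψ s (a :: l)) :
    (l = [] ∧ ψ a) ∨ (¬ ψ a ∧ φ a ∧ MC.UntilPath φ ψ a l) := by
  cases h with
  | single h => exact Or.inl ⟨rfl, h⟩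
  | cons hψ hφ h => exact Or.inr ⟨hψ, hφ, h⟩

lemma pathProb_nonneg (hp0 : ∀ s s', 0 ≤ p s s') :
    ∀ (l : List S) (s : S), 0 ≤ MC.pathProb p s l := by
  intro l
  induction l with
  | nil => intro s; simp [MC.pathProb]
  | cons a l ih => intro s; exact mul_nonneg (hp0 s a) (ih a)

lemma sum_pathProb_le (hp0 : ∀ s s', 0 ≤ p s s') (hp1 : ∀ s, ∑ s', p s s' = 1) :
    ∀ (n : ℕ) (s : S) (F : Finset (List S)),
      (∀ l ∈ F, MC.UntilPath (fun _ => True) ψ s l ∧ l.length ≤ n) →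
      ∑ l ∈ F, MC.pathProb p s l ≤ iterU p ψ n s := by
  intro n
  induction n with
  | zero =>
    intro s F hF
    have hFe : F = ∅ := by
      apply Finset.eq_empty_of_forall_notMem
      intro l hl
      obtain ⟨h1, h2⟩ := hF l hl
      have := untilPath_ne_nil h1
      cases l with
      | nil => exact this rfl
      | cons a l => simp at h2
    simp [hFe, iterU]
  | succ n ih =>
    intro s F hF
    have key : ∑ l ∈ F, MC.pathProb p s l
        = ∑ o : Option S, ∑ l ∈ F.filter (fun l => l.head? = o), MC.pathProb p s l :=
      (Finset.sum_fiberwise_of_maps_to (fun l _ => Finset.mem_univ _) _).symm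
    rw [key, Fintype.sum_option]
    have hnone : F.filter (fun l => l.head? = none) = ∅ := by
      apply Finset.eq_empty_of_forall_notMem
      intro l hl
      rw [Finset.mem_filter] at hl
      obtain ⟨hlF, hlh⟩ := hl
      have := untilPath_ne_nil (hF l hlF).1
      cases l with
      | nil => exact this rfl
      | cons a l => simp at hlh
    rw [hnone]
    simp only [Finset.sum_empty, zero_add]
    show ∑ s' : S, ∑ l ∈ F.filter (fun l => l.head? = some s'), MC.pathProb p s l
        ≤ ∑ s', p s s' * (if ψ s' then 1 else iterU p ψ n s')
    apply Finset.sum_le_sum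
    intro s' _
    set A := F.filter (fun l => l.head? = some s') with hA
    have hmem : ∀ l ∈ A, l.head? = some s' ∧ l ∈ F := by
      intro l hl
      rw [hA, Finset.mem_filter] at hl
      exact ⟨hl.2, hl.1⟩
    have hcons : ∀ l ∈ A, l = s' :: l.tail := by
      intro l hl
      obtain ⟨hh, _⟩ := hmem l hl
      cases l with
      | nil => simp at hh
      | cons a t => simp at hh; rw [hh]; rfl
    have hinj : ∀ x ∈ A, ∀ y ∈ A, x.tail = y.tail → x = y := by
      intro x hx y hy hxy
      rw [hcons x hx, hcons y hy, hxy]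
    have hsum : ∑ l ∈ A, MC.pathProb p s l
        = ∑ l' ∈ A.image List.tail, (p s s' * MC.pathProb p s' l') := by
      rw [Finset.sum_image hinj]
      apply Finset.sum_congr rfl
      intro x hx
      conv_lhs => rw [hcons x hx]
      rfl
    rw [hsum, ← Finset.mul_sum]
    apply mul_le_mul_of_nonneg_left _ (hp0 s s')
    by_cases hψ' : ψ s'
    · rw [if_pos hψ']
      have hsub : A.image List.tail ⊆ {[]} := by
        intro l' hl'
        rw [Finset.mem_image] at hl'
        obtain ⟨x, hx, rfl⟩ := hl'
        have hx' := hcons x hx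
        have hu := (hF x (hmem x hx).2).1
        rw [hx'] at hu
        rcases untilPath_cons_elim hu with ⟨h1, _⟩ | ⟨h1, _⟩
        · rw [Finset.mem_singleton]; exact h1
        · exact absurd hψ' h1
      calc ∑ l' ∈ A.image List.tail, MC.pathProb p s' l'
          ≤ ∑ l' ∈ ({[]} : Finset (List S)), MC.pathProb p s' l' := by
            apply Finset.sum_le_sum_of_subset_of_nonneg hsub
            intro l' _ _
            exact pathProb_nonneg hp0 l' s'
        _ = 1 := by simp [MC.pathProb]
    · rw [if_neg hψ']
      apply ih s'
      intro l' hl'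
      rw [Finset.mem_image] at hl'
      obtain ⟨x, hx, rfl⟩ := hl'
      have hx' := hcons x hx
      have hu := (hF x (hmem x hx).2).1
      have hlen := (hF x (hmem x hx).2).2
      rw [hx'] at hu
      rcases untilPath_cons_elim hu with ⟨_, h2⟩ | ⟨_, _, h3⟩
      · exact absurd h2 hψ'
      · constructor
        · exact h3
        · have : x.length = x.tail.length + 1 := by rw [hx']; rfl
          omega

/-- The finset of all until-paths of length at most `n`. -/
noncomputable def pathsF (ψ : S → Prop) : ℕ → Finset (List S)
  | 0 => ∅
  | n+1 => Finset.univ.biUnion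
      (fun s' => if ψ s' then {[s']} else (pathsF ψ n).image (s' :: ·))

lemma pathsF_until : ∀ (n : ℕ) (l : List S), l ∈ pathsF ψ n →
    ∀ s : S, MC.UntilPath (fun _ => True) ψ s l := by
  intro n
  induction n with
  | zero => intro l hl; simp [pathsF] at hl
  | succ n ih =>
    intro l hl s
    rw [pathsF, Finset.mem_biUnion] at hl
    obtain ⟨s', _, hl⟩ := hl
    by_cases hψ' : ψ s'
    · rw [if_pos hψ'] at hl
      rw [Finset.mem_singleton] at hl
      rw [hl]
      exact MC.UntilPath.single hψ'
    · rw [if_neg hψ'] at hl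
      rw [Finset.mem_image] at hl
      obtain ⟨l', hl', rfl⟩ := hl
      exact MC.UntilPath.cons hψ' trivial (ih l' hl' s')

lemma pathsF_head {n : ℕ} {s' : S} {l : List S}
    (hl : l ∈ (if ψ s' then {[s']} else (pathsF ψ n).image (s' :: ·))) :
    l.head? = some s' := by
  by_cases hψ' : ψ s'
  · rw [if_pos hψ'] at hl; rw [Finset.mem_singleton] at hl; rw [hl]; rfl
  · rw [if_neg hψ'] at hl; rw [Finset.mem_image] at hl
    obtain ⟨l', _, rfl⟩ := hl; rfl

lemma iterU_le_pathsF (hp0 : ∀ s s', 0 ≤ p s s') :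
    ∀ (n : ℕ) (s : S), iterU p ψ n s ≤ ∑ l ∈ pathsF ψ n, MC.pathProb p s l := by
  intro n
  induction n with
  | zero => intro s; simp [pathsF, iterU]
  | succ n ih =>
    intro s
    rw [pathsF]
    have hdisj : ((Finset.univ : Finset S) : Set S).PairwiseDisjoint
        (fun s' => if ψ s' then {[s']} else (pathsF ψ n).image (s' :: ·)) := by
      intro a _ b _ hab
      apply Finset.disjoint_left.2
      intro l hla hlb
      have h1 := pathsF_head (ψ := ψ) (n := n) hla
      have h2 := pathsF_head (ψ := ψ) (n := n) hlb
      rw [h1] at h2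
      exact hab (Option.some_injective _ h2)
    rw [Finset.sum_biUnion hdisj]
    apply Finset.sum_le_sum
    intro s' _
    by_cases hψ' : ψ s'
    · rw [if_pos hψ', if_pos hψ']
      simp [MC.pathProb]
    · rw [if_neg hψ', if_neg hψ']
      have hsum : ∑ l ∈ (pathsF ψ n).image (s' :: ·), MC.pathProb p s l
          = ∑ l' ∈ pathsF ψ n, p s s' * MC.pathProb p s' l' := by
        rw [Finset.sum_image (by intro x _ y _ h; simpa using h)]
        apply Finset.sum_congr rfl
        intro x _
        rfl
      rw [hsum, ← Finset.mul_sum]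
      exact mul_le_mul_of_nonneg_left (ih s') (hp0 s s')

/-- Limit value of the iteration. -/
noncomputable def limU (p : S → S → ℝ) (ψ : S → Prop) (s : S) : ℝ :=
  ⨆ n, iterU p ψ n s

lemma bddAbove_iterU (hp0 : ∀ s s', 0 ≤ p s s') (hp1 : ∀ s, ∑ s', p s s' = 1) (s : S) :
    BddAbove (Set.range fun n => iterU p ψ n s) := by
  refine ⟨1, ?_⟩
  rintro x ⟨n, rfl⟩
  exact iterU_le_one hp0 hp1 n s

lemma iterU_le_limU (hp0 : ∀ s s', 0 ≤ p s s') (hp1 : ∀ s, ∑ s', p s s' = 1)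
    (n : ℕ) (s : S) : iterU p ψ n s ≤ limU p ψ s :=
  le_ciSup (bddAbove_iterU hp0 hp1 s) n

lemma limU_le_one (hp0 : ∀ s s', 0 ≤ p s s') (hp1 : ∀ s, ∑ s', p s s' = 1) (s : S) :
    limU p ψ s ≤ 1 :=
  ciSup_le fun n => iterU_le_one hp0 hp1 n s

lemma limU_nonneg (hp0 : ∀ s s', 0 ≤ p s s') (hp1 : ∀ s, ∑ s', p s s' = 1) (s : S) :
    0 ≤ limU p ψ s :=
  le_trans (by simp [iterU]) (iterU_le_limU hp0 hp1 0 s)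

lemma iterU_monotone (hp0 : ∀ s s', 0 ≤ p s s') (s : S) :
    Monotone (fun n => iterU p ψ n s) :=
  monotone_nat_of_le_succ fun n => iterU_mono hp0 n s

lemma tendsto_iterU (hp0 : ∀ s s', 0 ≤ p s s') (hp1 : ∀ s, ∑ s', p s s' = 1) (s : S) :
    Tendsto (fun n => iterU p ψ n s) atTop (𝓝 (limU p ψ s)) :=
  tendsto_atTop_ciSup (iterU_monotone hp0 s) (bddAbove_iterU hp0 hp1 s)

lemma hasSum_until (hp0 : ∀ s s', 0 ≤ p s s') (hp1 : ∀ s, ∑ s', p s s' = 1) (s : S) :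
    HasSum (fun l : {l : List S // MC.UntilPath (fun _ => True) ψ s l} =>
      MC.pathProb p s l.1) (limU p ψ s) := by
  apply hasSum_of_isLUB_of_nonneg
  · intro l; exact pathProb_nonneg hp0 l.1 s
  constructor
  · rintro x ⟨F, rfl⟩
    have hval : ∑ l ∈ F, MC.pathProb p s l.1
        = ∑ l ∈ F.image Subtype.val, MC.pathProb p s l := by
      rw [Finset.sum_image (by intro x _ y _ h; exact Subtype.ext h)]
    dsimp only
    rw [hval]
    calc ∑ l ∈ F.image Subtype.val, MC.pathProb p s l
        ≤ iterU p ψ (F.sup fun l => l.1.length) s := by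
          apply sum_pathProb_le hp0 hp1
          intro l hl
          rw [Finset.mem_image] at hl
          obtain ⟨x, hx, rfl⟩ := hl
          exact ⟨x.2, Finset.le_sup (f := fun l => l.1.length) hx⟩
      _ ≤ limU p ψ s := iterU_le_limU hp0 hp1 _ s
  · intro b hb
    apply ciSup_le
    intro n
    set F' : Finset {l : List S // MC.UntilPath (fun _ => True) ψ s l} :=
      (pathsF ψ n).attach.image (fun x => ⟨x.1, pathsF_until n x.1 x.2 s⟩) with hF'
    have h1 : ∑ l ∈ F', MC.pathProb p s l.1 = ∑ l ∈ pathsF ψ n, MC.pathProb p s l := by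
      rw [hF', Finset.sum_image (by
        intro x _ y _ h
        exact Subtype.ext (Subtype.mk_eq_mk.mp h))]
      exact Finset.sum_attach _ _
    calc iterU p ψ n s ≤ ∑ l ∈ pathsF ψ n, MC.pathProb p s l := iterU_le_pathsF hp0 n s
      _ = ∑ l ∈ F', MC.pathProb p s l.1 := h1.symm
      _ ≤ b := hb (Set.mem_range_self F')

lemma untilProb_eq (hp0 : ∀ s s', 0 ≤ p s s') (hp1 : ∀ s, ∑ s', p s s' = 1) (s : S) :
    MC.untilProb p (fun _ => True) ψ s = limU p ψ s :=
  (hasSum_until hp0 hp1 s).tsum_eq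

lemma reachProb_eq (hp0 : ∀ s s', 0 ≤ p s s') (hp1 : ∀ s, ∑ s', p s s' = 1) (s : S) :
    MC.reachProb p ψ s = if ψ s then 1 else limU p ψ s := by
  unfold MC.reachProb
  rw [untilProb_eq hp0 hp1]

lemma reachProb_nonneg (hp0 : ∀ s s', 0 ≤ p s s') (hp1 : ∀ s, ∑ s', p s s' = 1) (s : S) :
    0 ≤ MC.reachProb p ψ s := by
  rw [reachProb_eq hp0 hp1]
  split
  · norm_num
  · exact limU_nonneg hp0 hp1 s

lemma reachProb_le_one (hp0 : ∀ s s', 0 ≤ p s s') (hp1 : ∀ s, ∑ s', p s s' = 1) (s : S) :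
    MC.reachProb p ψ s ≤ 1 := by
  rw [reachProb_eq hp0 hp1]
  split
  · norm_num
  · exact limU_le_one hp0 hp1 s

lemma reachProb_of_mem (hψ : ψ s) : MC.reachProb p ψ s = 1 := if_pos hψ

lemma bellman (hp0 : ∀ s s', 0 ≤ p s s') (hp1 : ∀ s, ∑ s', p s s' = 1) {s : S}
    (hψ : ¬ ψ s) :
    MC.reachProb p ψ s = ∑ s', p s s' * MC.reachProb p ψ s' := by
  have h1 : Tendsto (fun n => iterU p ψ (n+1) s) atTop (𝓝 (limU p ψ s)) :=
    (tendsto_iterU hp0 hp1 s).comp (tendsto_add_atTop_nat 1)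
  have h2 : Tendsto (fun n => iterU p ψ (n+1) s) atTop
      (𝓝 (∑ s', p s s' * MC.reachProb p ψ s')) := by
    have heq : (fun n => iterU p ψ (n+1) s)
        = fun n => ∑ s', p s s' * (if ψ s' then 1 else iterU p ψ n s') := rfl
    rw [heq]
    apply tendsto_finset_sum
    intro s' _
    apply Tendsto.const_mul
    by_cases hψ' : ψ s'
    · simp only [if_pos hψ', reachProb_eq hp0 hp1]
      exact tendsto_const_nhds
    · simp only [if_neg hψ', reachProb_eq hp0 hp1]
      exact tendsto_iterU hp0 hp1 s'
  rw [reachProb_eq hp0 hp1, if_neg hψ]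
  exact tendsto_nhds_unique h1 h2

/-- Superharmonic functions dominate the reachability probability. -/
lemma reachProb_le_super (hp0 : ∀ s s', 0 ≤ p s s') (hp1 : ∀ s, ∑ s', p s s' = 1)
    (w : S → ℝ) (hw0 : ∀ s, 0 ≤ w s) (hw1 : ∀ s, ψ s → 1 ≤ w s)
    (hsup : ∀ s, ¬ ψ s → ∑ s', p s s' * w s' ≤ w s) :
    ∀ s, MC.reachProb p ψ s ≤ w s := by
  have key : ∀ (n : ℕ) (s : S), (if ψ s then 1 else iterU p ψ n s) ≤ w s := by
    intro n
    induction n with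
    | zero =>
      intro s
      split
      · exact hw1 s ‹_›
      · simpa [iterU] using hw0 s
    | succ n ih =>
      intro s
      split
      · exact hw1 s ‹_›
      · calc iterU p ψ (n+1) s
            = ∑ s', p s s' * (if ψ s' then 1 else iterU p ψ n s') := rfl
          _ ≤ ∑ s', p s s' * w s' := by
              apply Finset.sum_le_sum
              intro s' _
              exact mul_le_mul_of_nonneg_left (ih s') (hp0 s s')
          _ ≤ w s := hsup s ‹_›
  intro s
  rw [reachProb_eq hp0 hp1]
  by_cases hψs : ψ s
  · rw [if_pos hψs]; exact hw1 s hψs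
  · rw [if_neg hψs]
    apply ciSup_le
    intro n
    have := key n s
    rwa [if_neg hψs] at this

/-- If no `ψ` state is reachable, the reachability probability is zero. -/
lemma reachProb_zero (hp0 : ∀ s s', 0 ≤ p s s') (hp1 : ∀ s, ∑ s', p s s' = 1) {s : S}
    (h : ∀ t, Relation.ReflTransGen (fun a b => 0 < p a b) s t → ¬ ψ t) :
    MC.reachProb p ψ s = 0 := by
  have key : ∀ (n : ℕ) (t : S),
      (∀ t', Relation.ReflTransGen (fun a b => 0 < p a b) t t' → ¬ ψ t') →
      iterU p ψ n t = 0 := by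
    intro n
    induction n with
    | zero => intro t _; rfl
    | succ n ih =>
      intro t ht
      apply Finset.sum_eq_zero
      intro s' _
      rcases eq_or_lt_of_le (hp0 t s') with heq | hlt
      · rw [← heq, zero_mul]
      · have hstep : Relation.ReflTransGen (fun a b => 0 < p a b) t s' :=
          Relation.ReflTransGen.single hlt
        have hψ' : ¬ ψ s' := ht s' hstep
        rw [if_neg hψ', ih s' (fun t' h' => ht t' (hstep.trans h')), mul_zero]
  rw [reachProb_eq hp0 hp1, if_neg (h s Relation.ReflTransGen.refl)]
  have : ∀ n, iterU p ψ n s = 0 := fun n => key n s h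
  simp only [limU, this, ciSup_const]

end MCcore
end part2
section Backward
open MCcore Filter Topology

namespace Back

variable {S A T : Type}

/-- Finset-sum form of row stochasticity. -/
lemma mc_sum_one' [Fintype S] (M : MC S A) (s : S) : ∑ s', M.p s s' = 1 := by
  rw [← finsum_eq_sum_of_fintype]; exact M.sum_one s

/-- Value function of `M'`. -/
noncomputable def vpr [Fintype T] (M' : MC T A) (α : Set A) : T → ℝ :=
  MC.reachProb M'.p (fun t => M'.V t = α)

lemma vpr_nonneg [Fintype T] (M' : MC T A) (α : Set A) (t : T) : 0 ≤ vpr M' α t :=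
  reachProb_nonneg M'.nonneg (mc_sum_one' M') t

lemma vpr_le_one [Fintype T] (M' : MC T A) (α : Set A) (t : T) : vpr M' α t ≤ 1 :=
  reachProb_le_one M'.nonneg (mc_sum_one' M') t

lemma vpr_of_mem [Fintype T] {M' : MC T A} {α : Set A} {t : T} (h : M'.V t = α) :
    vpr M' α t = 1 := reachProb_of_mem h

variable [Fintype S] [Fintype T]

/-- The correspondence functions extracted from an at-every-step satisfaction relation. -/
noncomputable def Δf (I : IMC S A) (M' : MC T A) (R : T → S → Prop)
    (hR : IsSatRel M' I R) (t : T) (s : S) : T → S → ℝ :=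
  if h : R t s then Classical.choose (hR.2 t s h).2 else fun _ _ => 0

lemma Δf_spec (I : IMC S A) (M' : MC T A) (R : T → S → Prop)
    (hR : IsSatRel M' I R) {t : T} {s : S} (h : R t s) :
    (∀ t' s', 0 ≤ Δf I M' R hR t s t' s') ∧
    (∀ t', 0 < M'.p t t' → ∑ s', Δf I M' R hR t s t' s' = 1) ∧
    (∀ s', (∑ t', M'.p t t' * Δf I M' R hR t s t' s')
        ∈ Set.Icc (I.Plo s s') (I.Phi s s')) ∧
    (∀ t' s', 0 < Δf I M' R hR t s t' s' → R t' s') := by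
  have hspec := Classical.choose_spec (hR.2 t s h).2
  obtain ⟨h1, h2, h3, h4⟩ := hspec
  have hΔ : Δf I M' R hR t s = Classical.choose (hR.2 t s h).2 := dif_pos h
  rw [hΔ]
  refine ⟨h1, fun t' ht' => ?_, fun s' => ?_, h4⟩
  · rw [← finsum_eq_sum_of_fintype]; exact h2 t' ht'
  · rw [← finsum_eq_sum_of_fintype]; exact h3 s'

/-- The row of the collapsed chain induced by the related pair `(t,s)`. -/
noncomputable def μrow (I : IMC S A) (M' : MC T A) (R : T → S → Prop)
    (hR : IsSatRel M' I R) (t : T) (s : S) (s' : S) : ℝ :=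
  ∑ t', M'.p t t' * Δf I M' R hR t s t' s'

lemma μrow_nonneg (I : IMC S A) (M' : MC T A) (R : T → S → Prop)
    (hR : IsSatRel M' I R) {t : T} {s : S} (h : R t s) (s' : S) :
    0 ≤ μrow I M' R hR t s s' :=
  Finset.sum_nonneg fun t' _ =>
    mul_nonneg (M'.nonneg t t') ((Δf_spec I M' R hR h).1 t' s')

lemma μrow_sum_one (I : IMC S A) (M' : MC T A) (R : T → S → Prop)
    (hR : IsSatRel M' I R) {t : T} {s : S} (h : R t s) :
    ∑ s', μrow I M' R hR t s s' = 1 := by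
  unfold μrow
  rw [Finset.sum_comm]
  have : ∀ t' : T, ∑ s', M'.p t t' * Δf I M' R hR t s t' s' = M'.p t t' := by
    intro t'
    rw [← Finset.mul_sum]
    rcases eq_or_lt_of_le (M'.nonneg t t') with heq | hlt
    · rw [← heq, zero_mul]
    · rw [(Δf_spec I M' R hR h).2.1 t' hlt, mul_one]
  rw [Finset.sum_congr rfl fun t' _ => this t']
  exact mc_sum_one' M' t

lemma μrow_mem_Icc (I : IMC S A) (M' : MC T A) (R : T → S → Prop)
    (hR : IsSatRel M' I R) {t : T} {s : S} (h : R t s) (s' : S) :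
    μrow I M' R hR t s s' ∈ Set.Icc (I.Plo s s') (I.Phi s s') :=
  (Δf_spec I M' R hR h).2.2.1 s'

lemma μrow_pos_elim (I : IMC S A) (M' : MC T A) (R : T → S → Prop)
    (hR : IsSatRel M' I R) {t : T} {s : S} (h : R t s) {s' : S}
    (hpos : 0 < μrow I M' R hR t s s') : ∃ t', R t' s' := by
  obtain ⟨t', _, hne⟩ := Finset.exists_ne_zero_of_sum_ne_zero hpos.ne'
  have hΔpos : 0 < Δf I M' R hR t s t' s' := by
    rcases eq_or_lt_of_le ((Δf_spec I M' R hR h).1 t' s') with heq | hlt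
    · exact absurd (by rw [← heq, mul_zero]) hne
    · exact hlt
  exact ⟨t', (Δf_spec I M' R hR h).2.2.2 t' s' hΔpos⟩

/-- Key exchange computation: the expected value of an upper (resp. lower) bound
function under the collapsed row, compared with the `M'`-Bellman sum. -/
lemma μrow_exchange_le (I : IMC S A) (M' : MC T A) (α : Set A) (R : T → S → Prop)
    (hR : IsSatRel M' I R) {t : T} {s : S} (h : R t s) (w : S → ℝ)
    (hw : ∀ t' s', R t' s' → w s' ≤ vpr M' α t') :
    ∑ s', μrow I M' R hR t s s' * w s' ≤ ∑ t', M'.p t t' * vpr M' α t' := by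
  have hstep : ∑ s', μrow I M' R hR t s s' * w s'
      = ∑ s', ∑ t', (M'.p t t' * Δf I M' R hR t s t' s') * w s' := by
    apply Finset.sum_congr rfl
    intro s' _
    rw [μrow, Finset.sum_mul]
  rw [hstep, Finset.sum_comm]
  apply Finset.sum_le_sum
  intro t' _
  have hre : ∑ s', M'.p t t' * Δf I M' R hR t s t' s' * vpr M' α t'
      = M'.p t t' * vpr M' α t' := by
    rw [← Finset.sum_mul, ← Finset.mul_sum]
    rcases eq_or_lt_of_le (M'.nonneg t t') with heq | hlt
    · rw [← heq]; ring
    · rw [(Δf_spec I M' R hR h).2.1 t' hlt, mul_one]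
  rw [← hre]
  apply Finset.sum_le_sum
  intro s' _
  rcases eq_or_lt_of_le (mul_nonneg (M'.nonneg t t') ((Δf_spec I M' R hR h).1 t' s'))
    with heq | hlt
  · rw [← heq, zero_mul, zero_mul]
  · apply mul_le_mul_of_nonneg_left _ hlt.le
    have hΔpos : 0 < Δf I M' R hR t s t' s' := by
      by_contra hc
      have := (Δf_spec I M' R hR h).1 t' s'
      have : Δf I M' R hR t s t' s' = 0 := le_antisymm (not_lt.1 hc) this
      rw [this, mul_zero] at hlt
      exact lt_irrefl _ hlt
    exact hw t' s' ((Δf_spec I M' R hR h).2.2.2 t' s' hΔpos)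

lemma μrow_exchange_ge (I : IMC S A) (M' : MC T A) (α : Set A) (R : T → S → Prop)
    (hR : IsSatRel M' I R) {t : T} {s : S} (h : R t s) (w : S → ℝ)
    (hw : ∀ t' s', R t' s' → vpr M' α t' ≤ w s') :
    ∑ t', M'.p t t' * vpr M' α t' ≤ ∑ s', μrow I M' R hR t s s' * w s' := by
  have hstep : ∑ s', μrow I M' R hR t s s' * w s'
      = ∑ s', ∑ t', (M'.p t t' * Δf I M' R hR t s t' s') * w s' := by
    apply Finset.sum_congr rfl
    intro s' _
    rw [μrow, Finset.sum_mul]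
  rw [hstep, Finset.sum_comm]
  apply Finset.sum_le_sum
  intro t' _
  have hre : ∑ s', M'.p t t' * Δf I M' R hR t s t' s' * vpr M' α t'
      = M'.p t t' * vpr M' α t' := by
    rw [← Finset.sum_mul, ← Finset.mul_sum]
    rcases eq_or_lt_of_le (M'.nonneg t t') with heq | hlt
    · rw [← heq]; ring
    · rw [(Δf_spec I M' R hR h).2.1 t' hlt, mul_one]
  rw [← hre]
  apply Finset.sum_le_sum
  intro s' _
  rcases eq_or_lt_of_le (mul_nonneg (M'.nonneg t t') ((Δf_spec I M' R hR h).1 t' s'))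
    with heq | hlt
  · rw [← heq, zero_mul, zero_mul]
  · apply mul_le_mul_of_nonneg_left _ hlt.le
    have hΔpos : 0 < Δf I M' R hR t s t' s' := by
      by_contra hc
      have h0 := (Δf_spec I M' R hR h).1 t' s'
      have : Δf I M' R hR t s t' s' = 0 := le_antisymm (not_lt.1 hc) h0
      rw [this, mul_zero] at hlt
      exact lt_irrefl _ hlt
    exact hw t' s' ((Δf_spec I M' R hR h).2.2.2 t' s' hΔpos)

/-- Markov chain on `S` built from a selection of related `M'`-states. -/
noncomputable def mkMC (I : IMC S A) (M' : MC T A) (R : T → S → Prop)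
    (hR : IsSatRel M' I R) (sel : ∀ s : S, (∃ t, R t s) → T)
    (hsel : ∀ s h, R (sel s h) s) : MC S A where
  s0 := I.s0
  p := fun s => if h : ∃ t, R t s then μrow I M' R hR (sel s h) s
      else fun s' => if s' = s then 1 else 0
  nonneg := by
    intro s s'
    by_cases h : ∃ t, R t s
    · simp only [dif_pos h]; exact μrow_nonneg I M' R hR (hsel s h) s'
    · simp only [dif_neg h]; split <;> norm_num
  sum_one := by
    intro s
    rw [finsum_eq_sum_of_fintype]
    by_cases h : ∃ t, R t s
    · simp only [dif_pos h]; exact μrow_sum_one I M' R hR (hsel s h)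
    · simp only [dif_neg h]; simp
  V := I.V



lemma mkMC_row_pos (I : IMC S A) (M' : MC T A) (R : T → S → Prop)
    (hR : IsSatRel M' I R) (sel : ∀ s : S, (∃ t, R t s) → T)
    (hsel : ∀ s h, R (sel s h) s) {s : S} (h : ∃ t, R t s) :
    (mkMC I M' R hR sel hsel).p s = μrow I M' R hR (sel s h) s := by
  simp only [mkMC]
  rw [dif_pos h]

lemma mkMC_row_neg (I : IMC S A) (M' : MC T A) (R : T → S → Prop)
    (hR : IsSatRel M' I R) (sel : ∀ s : S, (∃ t, R t s) → T)
    (hsel : ∀ s h, R (sel s h) s) {s : S} (h : ¬ ∃ t, R t s) :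
    (mkMC I M' R hR sel hsel).p s = fun s' => if s' = s then 1 else 0 := by
  simp only [mkMC]
  rw [dif_neg h]

lemma mkMC_reach_rel (I : IMC S A) (M' : MC T A) (R : T → S → Prop)
    (hR : IsSatRel M' I R) (sel : ∀ s : S, (∃ t, R t s) → T)
    (hsel : ∀ s h, R (sel s h) s) :
    ∀ s, MC.Reaches (mkMC I M' R hR sel hsel).p (mkMC I M' R hR sel hsel).s0 s →
      ∃ t, R t s := by
  intro s h
  induction h with
  | refl => exact ⟨M'.s0, hR.1⟩
  | tail _ h2 ih =>
    rename_i b c _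
    obtain ⟨tb, htb⟩ := ih
    have hb : ∃ t, R t b := ⟨tb, htb⟩
    rw [mkMC_row_pos I M' R hR sel hsel hb] at h2
    exact μrow_pos_elim I M' R hR (hsel b hb) h2

lemma mkMC_satO (I : IMC S A) (M' : MC T A) (R : T → S → Prop)
    (hR : IsSatRel M' I R) (sel : ∀ s : S, (∃ t, R t s) → T)
    (hsel : ∀ s h, R (sel s h) s) :
    SatO (mkMC I M' R hR sel hsel) I := by
  refine ⟨rfl, rfl, ?_⟩
  intro s hs s'
  obtain ⟨t, ht⟩ := mkMC_reach_rel I M' R hR sel hsel s hs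
  have hb : ∃ t, R t s := ⟨t, ht⟩
  rw [mkMC_row_pos I M' R hR sel hsel hb]
  exact μrow_mem_Icc I M' R hR (hsel s hb) s'

lemma mkMC_Preach (I : IMC S A) (M' : MC T A) (R : T → S → Prop)
    (hR : IsSatRel M' I R) (sel : ∀ s : S, (∃ t, R t s) → T)
    (hsel : ∀ s h, R (sel s h) s) (α : Set A) :
    MC.Preach (mkMC I M' R hR sel hsel) α
      = MC.reachProb (mkMC I M' R hR sel hsel).p (fun s => I.V s = α) I.s0 := rfl

end Back
end Backward
section Backward2
open MCcore Filter Topology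

namespace Back

variable {S A T : Type} [Fintype S] [Fintype T]

lemma exists_min_rel (M' : MC T A) (α : Set A) (R : T → S → Prop) (s : S)
    (h : ∃ t, R t s) :
    ∃ t, R t s ∧ ∀ t'', R t'' s → vpr M' α t ≤ vpr M' α t'' := by
  obtain ⟨t0, ht0⟩ := h
  obtain ⟨b, hb, hmin⟩ := Finset.exists_min_image
    (Finset.univ.filter (fun t => R t s)) (vpr M' α) ⟨t0, by simp [ht0]⟩
  rw [Finset.mem_filter] at hb
  exact ⟨b, hb.2, fun t'' h'' => hmin t'' (by simp [h''])⟩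

lemma exists_max_rel (M' : MC T A) (α : Set A) (R : T → S → Prop) (s : S)
    (h : ∃ t, R t s) :
    ∃ t, R t s ∧ ∀ t'', R t'' s → vpr M' α t'' ≤ vpr M' α t := by
  obtain ⟨t0, ht0⟩ := h
  obtain ⟨b, hb, hmax⟩ := Finset.exists_max_image
    (Finset.univ.filter (fun t => R t s)) (vpr M' α) ⟨t0, by simp [ht0]⟩
  rw [Finset.mem_filter] at hb
  exact ⟨b, hb.2, fun t'' h'' => hmax t'' (by simp [h''])⟩

/-- Selection of a value-minimal related state. -/
noncomputable def selMin (M' : MC T A) (α : Set A) (R : T → S → Prop)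
    (s : S) (h : ∃ t, R t s) : T :=
  Classical.choose (exists_min_rel M' α R s h)

lemma selMin_R (M' : MC T A) (α : Set A) (R : T → S → Prop) (s : S) (h : ∃ t, R t s) :
    R (selMin M' α R s h) s :=
  (Classical.choose_spec (exists_min_rel M' α R s h)).1

lemma selMin_min (M' : MC T A) (α : Set A) (R : T → S → Prop) (s : S) (h : ∃ t, R t s)
    {t'' : T} (h'' : R t'' s) : vpr M' α (selMin M' α R s h) ≤ vpr M' α t'' :=
  (Classical.choose_spec (exists_min_rel M' α R s h)).2 t'' h''

/-- The "minimizing" once-and-for-all implementation. -/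
noncomputable def Mlow (I : IMC S A) (M' : MC T A) (α : Set A) (R : T → S → Prop)
    (hR : IsSatRel M' I R) : MC S A :=
  mkMC I M' R hR (selMin M' α R) (selMin_R M' α R)

lemma Mlow_satO (I : IMC S A) (M' : MC T A) (α : Set A) (R : T → S → Prop)
    (hR : IsSatRel M' I R) : SatO (Mlow I M' α R hR) I :=
  mkMC_satO I M' R hR _ _

lemma Mlow_bound (I : IMC S A) (M' : MC T A) (α : Set A) (R : T → S → Prop)
    (hR : IsSatRel M' I R) :
    MC.Preach (Mlow I M' α R hR) α ≤ MC.Preach M' α := by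
  set M := Mlow I M' α R hR with hM
  have hp0 : ∀ s s', 0 ≤ M.p s s' := M.nonneg
  have hp1 : ∀ s, ∑ s', M.p s s' = 1 := mc_sum_one' M
  set w : S → ℝ := fun s => if h : ∃ t, R t s then vpr M' α (selMin M' α R s h) else 1
    with hw
  have hwmin : ∀ t' s', R t' s' → w s' ≤ vpr M' α t' := by
    intro t' s' h'
    have hA : ∃ t, R t s' := ⟨t', h'⟩
    rw [hw]
    simp only [dif_pos hA]
    exact selMin_min M' α R s' hA h'
  have key : ∀ s, MC.reachProb M.p (fun s => I.V s = α) s ≤ w s := by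
    apply reachProb_le_super hp0 hp1
    · intro s
      rw [hw]; dsimp only
      by_cases h : ∃ t, R t s
      · simp only [dif_pos h]; exact vpr_nonneg M' α _
      · simp only [dif_neg h]; norm_num
    · intro s hψs
      rw [hw]; dsimp only
      by_cases h : ∃ t, R t s
      · simp only [dif_pos h]
        have hlab : M'.V (selMin M' α R s h) = I.V s := (hR.2 _ _ (selMin_R M' α R s h)).1
        have : M'.V (selMin M' α R s h) = α := by rw [hlab]; exact hψs
        rw [vpr_of_mem this]
      · simp only [dif_neg h]
        exact le_refl 1
    · intro s hψs
      by_cases h : ∃ t, R t s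
      · have hrow : M.p s = μrow I M' R hR (selMin M' α R s h) s :=
          mkMC_row_pos I M' R hR _ _ h
        set t := selMin M' α R s h with hts
        have hRt : R t s := selMin_R M' α R s h
        have hψ't : ¬ (M'.V t = α) := by
          rw [(hR.2 _ _ hRt).1]; exact hψs
        have hbell : vpr M' α t = ∑ t', M'.p t t' * vpr M' α t' :=
          bellman M'.nonneg (mc_sum_one' M') hψ't
        calc ∑ s', M.p s s' * w s'
            = ∑ s', μrow I M' R hR t s s' * w s' := by rw [hrow]
          _ ≤ ∑ t', M'.p t t' * vpr M' α t' :=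
              μrow_exchange_le I M' α R hR hRt w hwmin
          _ = vpr M' α t := hbell.symm
          _ = w s := by rw [hw]; simp only [dif_pos h]; rfl
      · have hrow : M.p s = fun s' => if s' = s then 1 else 0 :=
          mkMC_row_neg I M' R hR _ _ h
        rw [hrow]
        have : ∑ s', (if s' = s then (1:ℝ) else 0) * w s' = w s := by
          rw [Finset.sum_eq_single s]
          · simp
          · intro b _ hb; rw [if_neg hb, zero_mul]
          · intro hs; exact absurd (Finset.mem_univ s) hs
        rw [this]
  have hfin : MC.Preach M α ≤ w I.s0 := key I.s0
  have hs0 : ∃ t, R t I.s0 := ⟨M'.s0, hR.1⟩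
  calc MC.Preach M α ≤ w I.s0 := hfin
    _ ≤ vpr M' α M'.s0 := by
        rw [hw]; simp only [dif_pos hs0]
        exact selMin_min M' α R I.s0 hs0 hR.1
    _ = MC.Preach M' α := rfl

end Back
end Backward2
section Backward3
open MCcore Filter Topology

namespace Back

variable {S A T : Type} [Fintype S] [Fintype T]

/-- Level sets of states from which a value-maximal collapsed row can make progress
towards the target. -/
noncomputable def Esets (I : IMC S A) (M' : MC T A) (α : Set A) (R : T → S → Prop)
    (hR : IsSatRel M' I R) : ℕ → Set S
  | 0 => {s | I.V s = α}
  | k+1 => Esets I M' α R hR k ∪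
      {s | ∃ t, (R t s ∧ ∀ t'', R t'' s → vpr M' α t'' ≤ vpr M' α t) ∧
        ∃ s', 0 < μrow I M' R hR t s s' ∧ s' ∈ Esets I M' α R hR k}

lemma Esets_mono (I : IMC S A) (M' : MC T A) (α : Set A) (R : T → S → Prop)
    (hR : IsSatRel M' I R) {k j : ℕ} (h : k ≤ j) :
    Esets I M' α R hR k ⊆ Esets I M' α R hR j := by
  induction j with
  | zero => rw [Nat.le_zero.1 h]
  | succ j ih =>
    by_cases h' : k ≤ j
    · exact (ih h').trans (by rw [Esets]; exact Set.subset_union_left)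
    · have : k = j + 1 := by omega
      rw [this]

lemma exists_selB (I : IMC S A) (M' : MC T A) (α : Set A) (R : T → S → Prop)
    (hR : IsSatRel M' I R) (s : S) (h : ∃ t, R t s) :
    ∃ t, (R t s ∧ ∀ t'', R t'' s → vpr M' α t'' ≤ vpr M' α t) ∧
      ∀ k, s ∈ Esets I M' α R hR (k+1) → s ∉ Esets I M' α R hR k →
        ∃ s', 0 < μrow I M' R hR t s s' ∧ s' ∈ Esets I M' α R hR k := by
  by_cases hk : ∃ k, s ∈ Esets I M' α R hR (k+1) ∧ s ∉ Esets I M' α R hR k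
  · obtain ⟨k, hk1, hk2⟩ := hk
    have hmem : s ∈ Esets I M' α R hR k ∪
        {s | ∃ t, (R t s ∧ ∀ t'', R t'' s → vpr M' α t'' ≤ vpr M' α t) ∧
          ∃ s', 0 < μrow I M' R hR t s s' ∧ s' ∈ Esets I M' α R hR k} := hk1
    rcases hmem with hmem | hmem
    · exact absurd hmem hk2
    · obtain ⟨t, ht1, ht2⟩ := hmem
      refine ⟨t, ht1, ?_⟩
      intro k' h1 h2
      have hkk : k' = k := by
        by_contra hne
        rcases Nat.lt_or_ge k' k with hlt | hge
        · exact hk2 (Esets_mono I M' α R hR (Nat.succ_le_of_lt hlt) h1)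
        · have : k < k' := lt_of_le_of_ne hge (fun hc => hne hc.symm)
          exact h2 (Esets_mono I M' α R hR (Nat.succ_le_of_lt this) hk1)
      rw [hkk]
      exact ht2
  · push_neg at hk
    obtain ⟨t, ht, htmax⟩ := exists_max_rel M' α R s h
    exact ⟨t, ⟨ht, htmax⟩, fun k h1 h2 => absurd (hk k h1) (fun hc => h2 hc)⟩

/-- Selection of a value-maximal related state which in addition makes progress
towards the target whenever possible. -/
noncomputable def selB (I : IMC S A) (M' : MC T A) (α : Set A) (R : T → S → Prop)
    (hR : IsSatRel M' I R) (s : S) (h : ∃ t, R t s) : T :=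
  Classical.choose (exists_selB I M' α R hR s h)

lemma selB_R (I : IMC S A) (M' : MC T A) (α : Set A) (R : T → S → Prop)
    (hR : IsSatRel M' I R) (s : S) (h : ∃ t, R t s) :
    R (selB I M' α R hR s h) s :=
  (Classical.choose_spec (exists_selB I M' α R hR s h)).1.1

lemma selB_max (I : IMC S A) (M' : MC T A) (α : Set A) (R : T → S → Prop)
    (hR : IsSatRel M' I R) (s : S) (h : ∃ t, R t s) {t'' : T} (h'' : R t'' s) :
    vpr M' α t'' ≤ vpr M' α (selB I M' α R hR s h) :=
  (Classical.choose_spec (exists_selB I M' α R hR s h)).1.2 t'' h''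

lemma selB_wit (I : IMC S A) (M' : MC T A) (α : Set A) (R : T → S → Prop)
    (hR : IsSatRel M' I R) (s : S) (h : ∃ t, R t s) {k : ℕ}
    (h1 : s ∈ Esets I M' α R hR (k+1)) (h2 : s ∉ Esets I M' α R hR k) :
    ∃ s', 0 < μrow I M' R hR (selB I M' α R hR s h) s s' ∧ s' ∈ Esets I M' α R hR k :=
  (Classical.choose_spec (exists_selB I M' α R hR s h)).2 k h1 h2

/-- The maximal related value. -/
noncomputable def mval (I : IMC S A) (M' : MC T A) (α : Set A) (R : T → S → Prop)
    (hR : IsSatRel M' I R) (s : S) : ℝ :=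
  if h : ∃ t, R t s then vpr M' α (selB I M' α R hR s h) else 0

lemma mval_ge (I : IMC S A) (M' : MC T A) (α : Set A) (R : T → S → Prop)
    (hR : IsSatRel M' I R) {t : T} {s : S} (h : R t s) :
    vpr M' α t ≤ mval I M' α R hR s := by
  have hA : ∃ t, R t s := ⟨t, h⟩
  rw [mval, dif_pos hA]
  exact selB_max I M' α R hR s hA h

lemma mval_eq (I : IMC S A) (M' : MC T A) (α : Set A) (R : T → S → Prop)
    (hR : IsSatRel M' I R) {s : S} (h : ∃ t, R t s) :
    mval I M' α R hR s = vpr M' α (selB I M' α R hR s h) := dif_pos h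

lemma mval_le_one (I : IMC S A) (M' : MC T A) (α : Set A) (R : T → S → Prop)
    (hR : IsSatRel M' I R) (s : S) : mval I M' α R hR s ≤ 1 := by
  rw [mval]
  split
  · exact vpr_le_one M' α _
  · norm_num

lemma mval_pos_elim (I : IMC S A) (M' : MC T A) (α : Set A) (R : T → S → Prop)
    (hR : IsSatRel M' I R) {s : S} (h : 0 < mval I M' α R hR s) : ∃ t, R t s := by
  by_contra hc
  rw [mval, dif_neg hc] at h
  exact lt_irrefl _ h

/-- Any state with positive maximal value lies in some level set. -/
lemma Esets_cover (I : IMC S A) (M' : MC T A) (α : Set A) (R : T → S → Prop)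
    (hR : IsSatRel M' I R) (s : S) (hm : 0 < mval I M' α R hR s) :
    ∃ k, s ∈ Esets I M' α R hR k := by
  by_contra hbad
  push_neg at hbad
  set U : Finset S := Finset.univ.filter
    (fun x => 0 < mval I M' α R hR x ∧ ∀ k, x ∉ Esets I M' α R hR k) with hU
  have hsU : s ∈ U := by
    rw [hU, Finset.mem_filter]
    exact ⟨Finset.mem_univ s, hm, hbad⟩
  obtain ⟨s₁, hs₁U, hs₁max⟩ := Finset.exists_max_image U (mval I M' α R hR) ⟨s, hsU⟩
  set Mstar := mval I M' α R hR s₁ with hMstar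
  have hUprop : ∀ x ∈ U, 0 < mval I M' α R hR x ∧ ∀ k, x ∉ Esets I M' α R hR k := by
    intro x hx
    rw [hU, Finset.mem_filter] at hx
    exact hx.2
  have hMpos : 0 < Mstar := lt_of_lt_of_le hm (hs₁max s hsU)
  set Q : T → Prop := fun t => vpr M' α t = Mstar ∧
    ∃ x, x ∈ U ∧ mval I M' α R hR x = Mstar ∧ R t x with hQ
  have h1A : ∃ t, R t s₁ := mval_pos_elim I M' α R hR (hUprop s₁ hs₁U).1
  have hQ1 : Q (selB I M' α R hR s₁ h1A) := by
    rw [hQ]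
    refine ⟨(mval_eq I M' α R hR h1A).symm, s₁, hs₁U, rfl, selB_R I M' α R hR s₁ h1A⟩
  have hstep : ∀ t, Q t → (¬ (M'.V t = α)) ∧ ∀ t', 0 < M'.p t t' → Q t' := by
    intro t hQt
    rw [hQ] at hQt
    obtain ⟨hvt, x, hxU, hmx, hRtx⟩ := hQt
    obtain ⟨hxpos, hxE⟩ := hUprop x hxU
    have hlab : M'.V t = I.V x := (hR.2 t x hRtx).1
    have hψx : ¬ (I.V x = α) := fun hc => hxE 0 hc
    have hψ't : ¬ (M'.V t = α) := by rw [hlab]; exact hψx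
    refine ⟨hψ't, ?_⟩
    have htmax : ∀ t'', R t'' x → vpr M' α t'' ≤ vpr M' α t := by
      intro t'' h''
      rw [hvt, ← hmx]
      exact mval_ge I M' α R hR h''
    have hsupp : ∀ s' k, 0 < μrow I M' R hR t x s' → s' ∉ Esets I M' α R hR k := by
      intro s' k hpos hmem
      exact hxE (k+1) (Or.inr ⟨t, ⟨hRtx, htmax⟩, s', hpos, hmem⟩)
    have hsucc : ∀ t', 0 < M'.p t t' →
        vpr M' α t' ≤ Mstar ∧ (vpr M' α t' = Mstar → Q t') := by
      intro t' hp
      have hrowΔ : ∑ s', Δf I M' R hR t x t' s' = 1 := (Δf_spec I M' R hR hRtx).2.1 t' hp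
      have hex : ∃ s', 0 < Δf I M' R hR t x t' s' := by
        by_contra hno
        push_neg at hno
        have : ∑ s', Δf I M' R hR t x t' s' = 0 :=
          Finset.sum_eq_zero fun s' _ =>
            le_antisymm (hno s') ((Δf_spec I M' R hR hRtx).1 t' s')
        rw [this] at hrowΔ
        norm_num at hrowΔ
      obtain ⟨s', hΔ⟩ := hex
      have hR' : R t' s' := (Δf_spec I M' R hR hRtx).2.2.2 t' s' hΔ
      have hμpos : 0 < μrow I M' R hR t x s' := by
        have hterm : 0 < M'.p t t' * Δf I M' R hR t x t' s' := mul_pos hp hΔ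
        calc (0:ℝ) < M'.p t t' * Δf I M' R hR t x t' s' := hterm
          _ ≤ μrow I M' R hR t x s' := Finset.single_le_sum
              (fun t'' _ => mul_nonneg (M'.nonneg t t'')
                ((Δf_spec I M' R hR hRtx).1 t'' s')) (Finset.mem_univ t')
      have hs'E : ∀ k, s' ∉ Esets I M' α R hR k := fun k => hsupp s' k hμpos
      have hv'le : vpr M' α t' ≤ mval I M' α R hR s' := mval_ge I M' α R hR hR'
      by_cases hms' : 0 < mval I M' α R hR s'
      · have hs'U : s' ∈ U := by
          rw [hU, Finset.mem_filter]
          exact ⟨Finset.mem_univ s', hms', hs'E⟩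
        have hmle : mval I M' α R hR s' ≤ Mstar := hs₁max s' hs'U
        refine ⟨hv'le.trans hmle, fun he => ?_⟩
        rw [hQ]
        refine ⟨he, s', hs'U, le_antisymm hmle ?_, hR'⟩
        rw [← he]; exact hv'le
      · have hmle : mval I M' α R hR s' ≤ 0 := not_lt.1 hms'
        refine ⟨(hv'le.trans hmle).trans hMpos.le, fun he => ?_⟩
        exfalso
        rw [he] at hv'le
        exact absurd (lt_of_lt_of_le (lt_of_lt_of_le hMpos hv'le) hmle) (lt_irrefl 0)
    have hbell0 : vpr M' α t = ∑ t', M'.p t t' * vpr M' α t' :=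
      bellman M'.nonneg (mc_sum_one' M') hψ't
    have hbell : ∑ t', M'.p t t' * vpr M' α t' = Mstar := by
      rw [← hbell0]; exact hvt
    intro t' hp
    rcases eq_or_lt_of_le ((hsucc t' hp).1) with heq | hlt
    · exact (hsucc t' hp).2 heq
    · exfalso
      have hstrict : ∑ t'', M'.p t t'' * vpr M' α t'' < ∑ t'', M'.p t t'' * Mstar := by
        apply Finset.sum_lt_sum
        · intro t'' _
          rcases eq_or_lt_of_le (M'.nonneg t t'') with heq' | hlt'
          · rw [← heq', zero_mul, zero_mul]
          · exact mul_le_mul_of_nonneg_left (hsucc t'' hlt').1 hlt'.le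
        · exact ⟨t', Finset.mem_univ t', mul_lt_mul_of_pos_left hlt hp⟩
      rw [← Finset.sum_mul, mc_sum_one' M' t, one_mul, hbell] at hstrict
      exact lt_irrefl _ hstrict
  have hinv : ∀ t', Relation.ReflTransGen (fun a b => 0 < M'.p a b)
      (selB I M' α R hR s₁ h1A) t' → Q t' := by
    intro t' h
    induction h with
    | refl => exact hQ1
    | tail _ h2 ih => exact (hstep _ ih).2 _ h2
  have hzero : vpr M' α (selB I M' α R hR s₁ h1A) = 0 :=
    reachProb_zero M'.nonneg (mc_sum_one' M') (fun t' h => (hstep t' (hinv t' h)).1)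
  rw [hQ1.1] at hzero
  rw [hzero] at hMpos
  exact lt_irrefl _ hMpos

end Back
end Backward3
section Backward4
open MCcore Filter Topology

namespace Back

variable {S A T : Type} [Fintype S] [Fintype T]

/-- The "maximizing" once-and-for-all implementation. -/
noncomputable def Mhigh (I : IMC S A) (M' : MC T A) (α : Set A) (R : T → S → Prop)
    (hR : IsSatRel M' I R) : MC S A :=
  mkMC I M' R hR (selB I M' α R hR) (selB_R I M' α R hR)

lemma Mhigh_satO (I : IMC S A) (M' : MC T A) (α : Set A) (R : T → S → Prop)
    (hR : IsSatRel M' I R) : SatO (Mhigh I M' α R hR) I :=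
  mkMC_satO I M' R hR _ _

lemma Mhigh_bound (I : IMC S A) (M' : MC T A) (α : Set A) (R : T → S → Prop)
    (hR : IsSatRel M' I R) :
    MC.Preach M' α ≤ MC.Preach (Mhigh I M' α R hR) α := by
  set M := Mhigh I M' α R hR with hMdef
  have hp0 : ∀ s s', 0 ≤ M.p s s' := M.nonneg
  have hp1 : ∀ s, ∑ s', M.p s s' = 1 := mc_sum_one' M
  set vM : S → ℝ := MC.reachProb M.p (fun s => I.V s = α) with hvM
  -- main claim : mval ≤ vM everywhere
  have main : ∀ s, mval I M' α R hR s ≤ vM s := by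
    by_contra hcon
    push_neg at hcon
    obtain ⟨sbad, hbad⟩ := hcon
    set g : S → ℝ := fun s => mval I M' α R hR s - vM s with hg
    obtain ⟨smax, _, hmax⟩ := Finset.exists_max_image Finset.univ g
      ⟨sbad, Finset.mem_univ sbad⟩
    set H := g smax with hH
    have hHpos : 0 < H := lt_of_lt_of_le (sub_pos.2 hbad) (hmax sbad (Finset.mem_univ sbad))
    have hvM_nonneg : ∀ s, 0 ≤ vM s := fun s => reachProb_nonneg hp0 hp1 s
    have hgE : ∀ s, g s = H → ∃ k, s ∈ Esets I M' α R hR k := by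
      intro s hs
      apply Esets_cover I M' α R hR s
      have : 0 < g s := hs ▸ hHpos
      rw [hg] at this
      dsimp only at this
      have := lt_of_le_of_lt (hvM_nonneg s) (by linarith : vM s < mval I M' α R hR s)
      exact this
    set D : Finset S := Finset.univ.filter (fun s => g s = H) with hD
    set kf : S → ℕ := fun s => if hs : ∃ k, s ∈ Esets I M' α R hR k then Nat.find hs else 0
      with hkf
    have hsmaxD : smax ∈ D := by
      rw [hD, Finset.mem_filter]; exact ⟨Finset.mem_univ smax, rfl⟩
    obtain ⟨sm, hsmD, hsmmin⟩ := Finset.exists_min_image D kf ⟨smax, hsmaxD⟩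
    have hgsm : g sm = H := by
      rw [hD, Finset.mem_filter] at hsmD
      exact hsmD.2
    have hmpos : 0 < mval I M' α R hR sm := by
      have h1 : 0 < g sm := hgsm ▸ hHpos
      rw [hg] at h1
      dsimp only at h1
      exact lt_of_le_of_lt (hvM_nonneg sm) (by linarith)
    have hA : ∃ t, R t sm := mval_pos_elim I M' α R hR hmpos
    have hksm : ∃ k, sm ∈ Esets I M' α R hR k := hgE sm hgsm
    have hkfsm : kf sm = Nat.find hksm := dif_pos hksm
    have hk0mem : sm ∈ Esets I M' α R hR (Nat.find hksm) := Nat.find_spec hksm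
    rcases Nat.eq_zero_or_pos (Nat.find hksm) with hz | hpos
    · -- sm is a target state : vM sm = 1
      rw [hz] at hk0mem
      have hψ : I.V sm = α := hk0mem
      have : vM sm = 1 := reachProb_of_mem hψ
      have : g sm ≤ 0 := by
        rw [hg]; dsimp only; rw [this]
        have := mval_le_one I M' α R hR sm
        linarith
      rw [hgsm] at this
      exact absurd (lt_of_lt_of_le hHpos this) (lt_irrefl 0)
    · obtain ⟨k, hk⟩ : ∃ k, Nat.find hksm = k + 1 := ⟨Nat.find hksm - 1, by omega⟩
      have hnot : sm ∉ Esets I M' α R hR k := Nat.find_min hksm (by omega)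
      have hmem1 : sm ∈ Esets I M' α R hR (k+1) := by rw [← hk]; exact hk0mem
      have hψsm : ¬ (I.V sm = α) := by
        intro hc
        exact hnot (Esets_mono I M' α R hR (Nat.zero_le k) hc)
      obtain ⟨s', hμs', hs'E⟩ := selB_wit I M' α R hR sm hA hmem1 hnot
      have hrow : M.p sm = μrow I M' R hR (selB I M' α R hR sm hA) sm :=
        mkMC_row_pos I M' R hR _ _ hA
      -- Bellman for M at sm
      have hbellM : vM sm = ∑ s'', M.p sm s'' * vM s'' := bellman hp0 hp1 hψsm
      -- subsolution property at sm
      have hsub : mval I M' α R hR sm ≤ ∑ s'', M.p sm s'' * mval I M' α R hR s'' := by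
        rw [hrow]
        set t := selB I M' α R hR sm hA with ht
        have hRt : R t sm := selB_R I M' α R hR sm hA
        have hψ't : ¬ (M'.V t = α) := by
          rw [(hR.2 _ _ hRt).1]; exact hψsm
        have hbell' : vpr M' α t = ∑ t', M'.p t t' * vpr M' α t' :=
          bellman M'.nonneg (mc_sum_one' M') hψ't
        have hwge : ∀ t' s'', R t' s'' → vpr M' α t' ≤ mval I M' α R hR s'' :=
          fun t' s'' h'' => mval_ge I M' α R hR h''
        calc mval I M' α R hR sm = vpr M' α t := mval_eq I M' α R hR hA
          _ = ∑ t', M'.p t t' * vpr M' α t' := hbell'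
          _ ≤ ∑ s'', μrow I M' R hR t sm s'' * mval I M' α R hR s'' :=
              μrow_exchange_ge I M' α R hR hRt _ hwge
      -- hence g sm ≤ ∑ M.p sm * g
      have hgle : g sm ≤ ∑ s'', M.p sm s'' * g s'' := by
        rw [hg]
        dsimp only
        have : ∑ s'', M.p sm s'' * (mval I M' α R hR s'' - vM s'')
            = (∑ s'', M.p sm s'' * mval I M' α R hR s'')
              - ∑ s'', M.p sm s'' * vM s'' := by
          rw [← Finset.sum_sub_distrib]
          apply Finset.sum_congr rfl
          intro s'' _
          ring
        rw [this, ← hbellM]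
        have := hsub
        linarith
      -- all successors attain the maximum H
      have hallH : ∀ s'', 0 < M.p sm s'' → g s'' = H := by
        by_contra hnoall
        push_neg at hnoall
        obtain ⟨s₂, hs₂p, hs₂ne⟩ := hnoall
        have hs₂lt : g s₂ < H := lt_of_le_of_ne (hmax s₂ (Finset.mem_univ s₂)) hs₂ne
        have hstrict : ∑ s'', M.p sm s'' * g s'' < ∑ s'', M.p sm s'' * H := by
          apply Finset.sum_lt_sum
          · intro s'' _
            rcases eq_or_lt_of_le (hp0 sm s'') with heq | hlt
            · rw [← heq, zero_mul, zero_mul]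
            · exact mul_le_mul_of_nonneg_left (hmax s'' (Finset.mem_univ s'')) hlt.le
          · exact ⟨s₂, Finset.mem_univ s₂, mul_lt_mul_of_pos_left hs₂lt hs₂p⟩
        rw [← Finset.sum_mul, hp1 sm, one_mul] at hstrict
        have := hgle
        rw [hgsm] at this
        exact absurd (lt_of_le_of_lt this hstrict) (lt_irrefl H)
      have hgs' : g s' = H := by
        apply hallH s'
        rw [hrow]
        exact hμs'
      have hs'D : s' ∈ D := by
        rw [hD, Finset.mem_filter]; exact ⟨Finset.mem_univ s', hgs'⟩
      have hkfs' : kf s' ≤ k := by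
        have hks' : ∃ k', s' ∈ Esets I M' α R hR k' := ⟨k, hs'E⟩
        rw [hkf]
        dsimp only
        rw [dif_pos hks']
        exact Nat.find_le hs'E
      have : kf sm ≤ kf s' := hsmmin s' hs'D
      rw [hkfsm, hk] at this
      omega
  -- conclude
  have h1 : MC.Preach M' α = vpr M' α M'.s0 := rfl
  have h2 : vpr M' α M'.s0 ≤ mval I M' α R hR I.s0 := mval_ge I M' α R hR hR.1
  have h3 : mval I M' α R hR I.s0 ≤ vM I.s0 := main I.s0
  have h4 : vM I.s0 = MC.Preach M α := rfl
  rw [h1, ← h4]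
  exact h2.trans h3

end Back
end Backward4
section Final
open MCcore Back

lemma satA_of_satO {S A : Type} [Fintype S] {M : MC S A} {I : IMC S A}
    (h : SatO M I) : SatA M I := by
  obtain ⟨hs0, hV, hIcc⟩ := h
  refine ⟨fun t s => t = s ∧ MC.Reaches M.p M.s0 t, ?_, ?_⟩
  · exact ⟨hs0, Relation.ReflTransGen.refl⟩
  · rintro t s ⟨rfl, hreach⟩
    refine ⟨by rw [hV], ?_⟩
    refine ⟨fun t' s' => if t' = s' ∧ MC.Reaches M.p M.s0 t' then 1 else 0,
      ?_, ?_, ?_, ?_⟩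
    · intro t' s'; dsimp only; split <;> norm_num
    · intro t' hp
      have hreach' : MC.Reaches M.p M.s0 t' := hreach.tail hp
      rw [finsum_eq_sum_of_fintype]
      have : ∀ s' : S, (if t' = s' ∧ MC.Reaches M.p M.s0 t' then (1:ℝ) else 0)
          = if s' = t' then 1 else 0 := by
        intro s'
        by_cases he : t' = s'
        · rw [if_pos ⟨he, hreach'⟩, if_pos he.symm]
        · rw [if_neg (fun hc => he hc.1), if_neg (fun hc => he hc.symm)]
      rw [Finset.sum_congr rfl fun s' _ => this s']
      simp
    · intro s'
      rw [finsum_eq_sum_of_fintype]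
      have hsum : ∑ t', M.p t t' * (if t' = s' ∧ MC.Reaches M.p M.s0 t' then (1:ℝ) else 0)
          = M.p t s' := by
        by_cases hs'r : MC.Reaches M.p M.s0 s'
        · rw [Finset.sum_eq_single s']
          · rw [if_pos ⟨rfl, hs'r⟩, mul_one]
          · intro b _ hb
            rw [if_neg (fun hc => hb hc.1), mul_zero]
          · intro hs; exact absurd (Finset.mem_univ s') hs
        · have hzero : M.p t s' = 0 := by
            by_contra hc
            have hpos : 0 < M.p t s' := lt_of_le_of_ne (M.nonneg t s') (Ne.symm hc)
            exact hs'r (hreach.tail hpos)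
          rw [hzero]
          apply Finset.sum_eq_zero
          intro b _
          by_cases hb : b = s' ∧ MC.Reaches M.p M.s0 b
          · obtain ⟨rfl, hb2⟩ := hb
            exact absurd hb2 hs'r
          · rw [if_neg hb, mul_zero]
      rw [hsum]
      exact hIcc t hreach s'
    · rintro t' s' hpos
      dsimp only at hpos
      by_cases hc : t' = s' ∧ MC.Reaches M.p M.s0 t'
      · exact hc
      · rw [if_neg hc] at hpos
        exact absurd hpos (lt_irrefl 0)

end Final

/-- equivalence of the two IMC semantics w.r.t. quantitative
reachability `P(◊α) ~ q` for `~ ∈ {≤, <, >, ≥}` and `0 < q < 1`. -/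
theorem stmt6 {S A : Type} [Finite S] (I : IMC S A) (α : Set A)
    (rel : ℝ → ℝ → Prop)
    (hrel : rel = (· ≤ ·) ∨ rel = (· < ·) ∨ rel = (· > ·) ∨ rel = (· ≥ ·))
    (q : ℝ) (hq0 : 0 < q) (hq1 : q < 1) :
    (∃ M : MC S A, SatO M I ∧ rel (M.Preach α) q) ↔
      ∃ (T : Type) (_ : Finite T) (M' : MC T A), SatA M' I ∧ rel (M'.Preach α) q := by
  constructor
  · rintro ⟨M, hMO, hrelM⟩
    haveI := Fintype.ofFinite S
    exact ⟨S, ‹Finite S›, M, satA_of_satO hMO, hrelM⟩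
  · rintro ⟨T, hT, M', hM', hrelM'⟩
    haveI := Fintype.ofFinite S
    haveI := @Fintype.ofFinite T hT
    obtain ⟨R, hR⟩ := hM'
    rcases hrel with h | h | h | h <;> subst h
    · exact ⟨Back.Mlow I M' α R hR, Back.Mlow_satO I M' α R hR,
        le_trans (Back.Mlow_bound I M' α R hR) hrelM'⟩
    · exact ⟨Back.Mlow I M' α R hR, Back.Mlow_satO I M' α R hR,
        lt_of_le_of_lt (Back.Mlow_bound I M' α R hR) hrelM'⟩
    · exact ⟨Back.Mhigh I M' α R hR, Back.Mhigh_satO I M' α R hR,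
        lt_of_lt_of_le hrelM' (Back.Mhigh_bound I M' α R hR)⟩
    · exact ⟨Back.Mhigh I M' α R hR, Back.Mhigh_satO I M' α R hR,
        le_trans hrelM' (Back.Mhigh_bound I M' α R hR)⟩
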